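/- Let P be a finite Γ-colored d-complete poset with top tree T and assume Γ is simply laced. Then the restriction κ|_T : T → Γ is a bijection, and for distinct x, y ∈ T, x and y are neighbors in the subposet T (one covers the other in T) if and only if κ(x) and κ(y) are adjacent in Γ. In other words, κ|_T is a graph isomorphism from the Hasse diagram graph of T onto Γ. -/

import Mathlib

/-!
Common definitions: Dynkin diagram data, Γ-colored posets, and the coloring
properties EC, NA, AC, ICE2, UCB1, LCB1 from the paper, together with
Γ-colored d-complete and Γ-colored minuscule posets, top trees, slant
irreducibility, extensions, lower frontier censuses, and full heaps.
-/

universe u v w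

variable {Γ : Type u} {P : Type v}

/-- The integers `θ a b` form a Dynkin diagram datum. -/
def DynkinDatum (θ : Γ → Γ → ℤ) : Prop :=
  (∀ a : Γ, θ a a = 2) ∧ (∀ a b : Γ, a ≠ b → θ a b ≤ 0) ∧
    (∀ a b : Γ, a ≠ b → (θ a b = 0 ↔ θ b a = 0))

/-- Colors `a` and `b` are adjacent. -/
def AdjColor (θ : Γ → Γ → ℤ) (a b : Γ) : Prop := θ a b < 0

/-- The Dynkin diagram is simply laced. -/
def SimplyLaced (θ : Γ → Γ → ℤ) : Prop :=
  ∀ a b : Γ, a ≠ b → θ a b = 0 ∨ θ a b = -1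

/-- All closed intervals are finite. -/
def LocallyFinitePoset (α : Type*) [PartialOrder α] : Prop :=
  ∀ x y : α, (Set.Icc x y).Finite

/-- A poset is connected if it cannot be written as a disjoint union of two nonempty
subposets with no comparabilities between them. -/
def ConnectedPoset (α : Type*) [PartialOrder α] : Prop :=
  ∀ S : Set α, S.Nonempty → Sᶜ.Nonempty → ∃ x ∈ S, ∃ y ∈ Sᶜ, x ≤ y ∨ y ≤ x

section
variable [PartialOrder P]

/-- (EC) Elements with equal colors are comparable. -/
def ColoredEC (κ : P → Γ) : Prop := ∀ x y : P, κ x = κ y → x ≤ y ∨ y ≤ x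

/-- (NA) Neighbors have adjacent colors. -/
def ColoredNA (θ : Γ → Γ → ℤ) (κ : P → Γ) : Prop :=
  ∀ x y : P, x ⋖ y → AdjColor θ (κ x) (κ y)

/-- (AC) Elements with adjacent colors are comparable. -/
def ColoredAC (θ : Γ → Γ → ℤ) (κ : P → Γ) : Prop :=
  ∀ x y : P, AdjColor θ (κ x) (κ y) → x ≤ y ∨ y ≤ x

/-- (ICE2) Between consecutive elements of a color `a`, the census of colors
adjacent to `a` is two. -/
def ColoredICE2 (θ : Γ → Γ → ℤ) (κ : P → Γ) : Prop :=
  ∀ (a : Γ) (x y : P), κ x = a → κ y = a → x < y → (∀ z ∈ Set.Ioo x y, κ z ≠ a) →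
    (∑ᶠ z ∈ Set.Ioo x y, -θ (κ z) a) = 2

/-- `U(x,P)`: elements above `x` with color adjacent to that of `x`. -/
def USet (θ : Γ → Γ → ℤ) (κ : P → Γ) (x : P) : Set P :=
  {y : P | x < y ∧ AdjColor θ (κ y) (κ x)}

/-- `L(x,P)`: elements below `x` with color adjacent to that of `x`. -/
def LSet (θ : Γ → Γ → ℤ) (κ : P → Γ) (x : P) : Set P :=
  {y : P | y < x ∧ AdjColor θ (κ y) (κ x)}

/-- (UCB1) Upper frontier census bound. -/
def ColoredUCB1 (θ : Γ → Γ → ℤ) (κ : P → Γ) : Prop :=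
  ∀ x : P, (∀ y : P, κ y = κ x → ¬x < y) →
    (USet θ κ x).Finite ∧ (∑ᶠ y ∈ USet θ κ x, -θ (κ y) (κ x)) ≤ 1

/-- (LCB1) Lower frontier census bound. -/
def ColoredLCB1 (θ : Γ → Γ → ℤ) (κ : P → Γ) : Prop :=
  ∀ x : P, (∀ y : P, κ y = κ x → ¬y < x) →
    (LSet θ κ x).Finite ∧ (∑ᶠ y ∈ LSet θ κ x, -θ (κ y) (κ x)) ≤ 1

/-- A Γ-colored d-complete poset: locally finite, surjectively colored, and
satisfying EC, NA, AC, ICE2, and UCB1. -/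
def GColoredDComplete (θ : Γ → Γ → ℤ) (κ : P → Γ) : Prop :=
  LocallyFinitePoset P ∧ Function.Surjective κ ∧ ColoredEC κ ∧ ColoredNA θ κ ∧
    ColoredAC θ κ ∧ ColoredICE2 θ κ ∧ ColoredUCB1 θ κ

/-- A Γ-colored minuscule poset: Γ-colored d-complete and LCB1. -/
def GColoredMinuscule (θ : Γ → Γ → ℤ) (κ : P → Γ) : Prop :=
  GColoredDComplete θ κ ∧ ColoredLCB1 θ κ

/-- The top tree: the set of elements maximal in their color class. -/
def TopTree (κ : P → Γ) : Set P := {x : P | ∀ y : P, κ y = κ x → ¬x < y}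

/-- `x` is covered by `y` within the subposet `S`. -/
def CoversIn (S : Set P) (x y : P) : Prop :=
  x ∈ S ∧ y ∈ S ∧ x < y ∧ ∀ z ∈ S, x < z → ¬z < y

/-- Slant irreducibility of a Γ-colored d-complete poset. -/
def SlantIrreducible (κ : P → Γ) : Prop :=
  ConnectedPoset P ∧ ∀ x y : P, CoversIn (TopTree κ) x y → ∃ z : P, z ≠ y ∧ κ z = κ y

/-- A saturated chain in a subposet `S`: a chain that is convex in `S`. -/
def SaturatedChainIn (S C : Set P) : Prop :=
  C ⊆ S ∧ IsChain (· ≤ ·) C ∧ ∀ x ∈ C, ∀ y ∈ C, ∀ z ∈ S, x < z → z < y → z ∈ C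

/-- The lower frontier census at the element `y`. -/
noncomputable def LCensus (θ : Γ → Γ → ℤ) (κ : P → Γ) (y : P) : ℤ :=
  ∑ᶠ x ∈ LSet θ κ y, -θ (κ x) (κ y)

/-- A full heap: locally finite, surjectively colored, EC, NA, AC, ICE2, and every
color class order-isomorphic to ℤ. -/
def FullHeap (θ : Γ → Γ → ℤ) (κ : P → Γ) : Prop :=
  LocallyFinitePoset P ∧ Function.Surjective κ ∧ ColoredEC κ ∧ ColoredNA θ κ ∧
    ColoredAC θ κ ∧ ColoredICE2 θ κ ∧ ∀ a : Γ, Nonempty ({x : P // κ x = a} ≃o ℤ)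

end

/-- `ι` realizes the colored poset `A` as an order filter of the colored poset `B`. -/
def FilterEmbedding {G : Type*} {A B : Type*} [PartialOrder A] [PartialOrder B]
    (κ : A → G) (κ' : B → G) (ι : A → B) : Prop :=
  (∀ p q : A, ι p ≤ ι q ↔ p ≤ q) ∧ (∀ p : A, κ' (ι p) = κ p) ∧ IsUpperSet (Set.range ι)

/-- `B` is an extension of `A` by the color `a`, with extending element `x`. -/
def IsExtensionBy {G : Type*} {A B : Type*} [PartialOrder A] [PartialOrder B]
    (θ : G → G → ℤ) (κ : A → G) (κ' : B → G) (a : G) (ι : A → B) (x : B) : Prop :=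
  Finite B ∧ GColoredDComplete θ κ' ∧ ConnectedPoset B ∧
    FilterEmbedding κ κ' ι ∧ (Set.range ι)ᶜ = {x} ∧ κ' x = a


section AuxProofs

variable {Γ : Type u} {P : Type v} [PartialOrder P]

lemma adjColor_symm {θ : Γ → Γ → ℤ} (hθ : DynkinDatum θ) {a b : Γ} (hab : a ≠ b)
    (h : AdjColor θ a b) : AdjColor θ b a := by
  obtain ⟨-, hle, h0⟩ := hθ
  rcases lt_or_eq_of_le (hle b a hab.symm) with h' | h'
  · exact h'
  · exact absurd ((h0 a b hab).mpr h') (ne_of_lt h)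

lemma uset_subsingleton {θ : Γ → Γ → ℤ} {κ : P → Γ} (hθ : DynkinDatum θ)
    (hsl : SimplyLaced θ) (hucb : ColoredUCB1 θ κ) {x : P} (hx : x ∈ TopTree κ) :
    ∀ y ∈ USet θ κ x, ∀ z ∈ USet θ κ x, y = z := by
  obtain ⟨hfin, hsum⟩ := hucb x hx
  have hterm : ∀ y ∈ USet θ κ x, -θ (κ y) (κ x) = 1 := by
    intro y hy
    have hlt : θ (κ y) (κ x) < 0 := hy.2
    have hne : κ y ≠ κ x := by
      intro h; rw [h, hθ.1] at hlt; omega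
    rcases hsl _ _ hne with h | h <;> omega
  have hcard : (hfin.toFinset.card : ℤ) ≤ 1 := by
    calc (hfin.toFinset.card : ℤ) = ∑ y ∈ hfin.toFinset, (1 : ℤ) := by simp
      _ = ∑ y ∈ hfin.toFinset, -θ (κ y) (κ x) :=
        Finset.sum_congr rfl (fun y hy => (hterm y (hfin.mem_toFinset.mp hy)).symm)
      _ = ∑ᶠ y ∈ USet θ κ x, -θ (κ y) (κ x) := by
        rw [← finsum_mem_coe_finset, hfin.coe_toFinset]
      _ ≤ 1 := hsum
  have h1 : hfin.toFinset.card ≤ 1 := by exact_mod_cast hcard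
  intro y hy z hz
  exact Finset.card_le_one.mp h1 y (hfin.mem_toFinset.mpr hy) z (hfin.mem_toFinset.mpr hz)

lemma topTree_injOn' {κ : P → Γ} (hec : ColoredEC κ) : Set.InjOn κ (TopTree κ) := by
  intro x hx y hy h
  rcases hec x y h with hle | hle
  · rcases hle.lt_or_eq with hlt | he
    · exact absurd hlt (hx y h.symm)
    · exact he
  · rcases hle.lt_or_eq with hlt | he
    · exact absurd hlt (hy x h)
    · exact he.symm

lemma exists_top_of_color [Fintype P] {κ : P → Γ} (hec : ColoredEC κ) (w : P) :
    ∃ t ∈ TopTree κ, κ t = κ w ∧ w ≤ t := by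
  classical
  obtain ⟨m, hm, hmax⟩ := (Finset.univ.filter (fun x => κ x = κ w)).exists_maximal
    ⟨w, by simp⟩
  simp only [Finset.mem_filter, Finset.mem_univ, true_and] at hm
  have hmT : m ∈ TopTree κ := by
    intro y hy hlt
    exact (hmax (by simp [hy, hm]) hlt.le).not_gt hlt
  refine ⟨m, hmT, hm, ?_⟩
  rcases hec m w (by rw [hm]) with hle | hle
  · rcases hle.lt_or_eq with hlt | he
    · exact absurd hlt (fun h => (hmax (by simp) h.le).not_gt h)
    · exact he.ge
  · exact hle

lemma mem_uset_of_covBy {θ : Γ → Γ → ℤ} {κ : P → Γ} (hθ : DynkinDatum θ)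
    (hna : ColoredNA θ κ) {x w : P} (hx : x ∈ TopTree κ) (hc : x ⋖ w) :
    w ∈ USet θ κ x := by
  have hadj : AdjColor θ (κ x) (κ w) := hna x w hc
  have hne : κ x ≠ κ w := by
    intro h
    exact hx w h.symm hc.lt
  exact ⟨hc.lt, adjColor_symm hθ hne hadj⟩

lemma cover_of_adj {θ : Γ → Γ → ℤ} {κ : P → Γ} [Fintype P]
    (hθ : DynkinDatum θ) (hsl : SimplyLaced θ) (hdc : GColoredDComplete θ κ)
    {x y : P} (hx : x ∈ TopTree κ) (hxy : x < y)
    (hadj : AdjColor θ (κ x) (κ y)) : ∀ z : P, x < z → ¬z < y := by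
  haveI : IsStronglyAtomic P := IsStronglyAtomic.of_wellFounded_lt wellFounded_lt
  intro z hz1 hz2
  obtain ⟨w, hcw, hwz⟩ := exists_covBy_le_of_lt hz1
  have hwU : w ∈ USet θ κ x := mem_uset_of_covBy hθ hdc.2.2.2.1 hx hcw
  have hneq : κ x ≠ κ y := fun h => hx y h.symm hxy
  have hyU : y ∈ USet θ κ x := ⟨hxy, adjColor_symm hθ hneq hadj⟩
  have : w = y := uset_subsingleton hθ hsl hdc.2.2.2.2.2.2 hx w hwU y hyU
  exact absurd (lt_of_le_of_lt hwz hz2) (this ▸ lt_irrefl w)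

lemma adj_of_coversIn {θ : Γ → Γ → ℤ} {κ : P → Γ} [Fintype P]
    (hθ : DynkinDatum θ) (hsl : SimplyLaced θ) (hdc : GColoredDComplete θ κ)
    {x y : P} (hc : CoversIn (TopTree κ) x y) : AdjColor θ (κ x) (κ y) := by
  haveI : IsStronglyAtomic P := IsStronglyAtomic.of_wellFounded_lt wellFounded_lt
  obtain ⟨hx, hy, hxy, hnb⟩ := hc
  obtain ⟨w, hcw, hwy⟩ := exists_covBy_le_of_lt hxy
  have hwU : w ∈ USet θ κ x := mem_uset_of_covBy hθ hdc.2.2.2.1 hx hcw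
  rcases hwy.lt_or_eq with hwlt | rfl
  · exfalso
    have hwT : w ∉ TopTree κ := fun hwT => hnb w hwT hcw.lt hwlt
    obtain ⟨t, htT, htc, hwt⟩ := exists_top_of_color hdc.2.2.1 w
    have hwtlt : w < t := by
      rcases hwt.lt_or_eq with h | h
      · exact h
      · exact absurd (h ▸ htT) hwT
    have htU : t ∈ USet θ κ x := ⟨lt_trans hcw.lt hwtlt, htc ▸ hwU.2⟩
    have : t = w := uset_subsingleton hθ hsl hdc.2.2.2.2.2.2 hx t htU w hwU
    exact absurd hwtlt (this ▸ lt_irrefl w)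
  · exact hdc.2.2.2.1 x w hcw

end AuxProofs

/-- For a finite Γ-colored d-complete poset with Γ simply laced, the
restriction of κ to the top tree is a bijection onto Γ carrying the Hasse diagram of
the top tree isomorphically onto the Dynkin diagram Γ. -/
theorem topTree_graphIso [Fintype Γ] [PartialOrder P] [Fintype P]
    (θ : Γ → Γ → ℤ) (κ : P → Γ) (hθ : DynkinDatum θ) (hsl : SimplyLaced θ)
    (hdc : GColoredDComplete θ κ) :
    (Set.InjOn κ (TopTree κ) ∧ ∀ a : Γ, ∃ x ∈ TopTree κ, κ x = a) ∧
      ∀ x ∈ TopTree κ, ∀ y ∈ TopTree κ, x ≠ y →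
        ((CoversIn (TopTree κ) x y ∨ CoversIn (TopTree κ) y x) ↔
          AdjColor θ (κ x) (κ y)) := by
  have hec := hdc.2.2.1
  have hac := hdc.2.2.2.2.1
  have hinj : Set.InjOn κ (TopTree κ) := topTree_injOn' hec
  refine ⟨⟨hinj, ?_⟩, ?_⟩
  · intro a
    obtain ⟨p, hp⟩ := hdc.2.1 a
    obtain ⟨t, htT, htc, -⟩ := exists_top_of_color hec p
    exact ⟨t, htT, htc.trans hp⟩
  · intro x hx y hy hne
    have hcne : κ x ≠ κ y := fun h => hne (hinj hx hy h)
    constructor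
    · rintro (hc | hc)
      · exact adj_of_coversIn hθ hsl hdc hc
      · exact adjColor_symm hθ hcne.symm (adj_of_coversIn hθ hsl hdc hc)
    · intro hadj
      rcases hac x y hadj with hle | hle
      · left
        refine ⟨hx, hy, hle.lt_of_ne hne, fun z hz h1 h2 => ?_⟩
        exact cover_of_adj hθ hsl hdc hx (hle.lt_of_ne hne) hadj z h1 h2
      · right
        have hadj' : AdjColor θ (κ y) (κ x) := adjColor_symm hθ hcne hadj
        refine ⟨hy, hx, hle.lt_of_ne hne.symm, fun z hz h1 h2 => ?_⟩
        exact cover_of_adj hθ hsl hdc hy (hle.lt_of_ne hne.symm) hadj' z h1 h2
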